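/- arXiv:2301.04522 — 2 statements merged into one kernel-verified Lean document; each statement's English description precedes it below -/
import Mathlib

section
/- Let $\bm{\Sigma}_{gh}$, $h=1,\ldots,M_g$, be positive semidefinite $k\times k$ matrices with $\sum_{h=1}^{M_g}\bm{\Sigma}_{gh}$ positive definite, and suppose $\sup_{g,h}\omega_{\max}\big(\bm{\Sigma}_{gh}(\sum_{h=1}^{M_g}\bm{\Sigma}_{gh})^{-1}\big) \le 1-c$ for some $c\in(0,1)$. Then for any nonzero vectors $\bm{b}_1,\bm{b}_2\in\mathbb{R}^k$, $\sum_{g=1}^G\sum_{h_1=1}^{M_g}\sum_{h_2\neq h_1}\bm{b}_1^\top\bm{\Sigma}_{gh_1}\bm{b}_1\,\bm{b}_2^\top\bm{\Sigma}_{gh_2}\bm{b}_2 \ge c\sum_{g=1}^G\sum_{h_1=1}^{M_g}\sum_{h_2=1}^{M_g}\bm{b}_1^\top\bm{\Sigma}_{gh_1}\bm{b}_1\,\bm{b}_2^\top\bm{\Sigma}_{gh_2}\bm{b}_2$. -/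
open Finset Matrix Pointwise

open scoped MatrixOrder in
lemma key_psd {n : ℕ} {A T : Matrix (Fin n) (Fin n) ℝ} (hA : A.PosSemidef) (hT : T.PosDef)
    {α : ℝ} (hspec : ∀ t ∈ spectrum ℝ (A * T⁻¹), t ≤ α) :
    (α • T - A).PosSemidef := by
  have hTi : (T⁻¹).PosDef := hT.inv
  set R := CFC.sqrt (T⁻¹) with hRdef
  have hR : R.PosSemidef := (CFC.sqrt_nonneg _).posSemidef
  have hRR : R * R = T⁻¹ := CFC.sqrt_mul_sqrt_self _ hTi.posSemidef.nonneg
  have hRH : Rᴴ = R := hR.1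
  have hRu : IsUnit R.det := by
    have h1 : IsUnit (R * R).det := by rw [hRR]; exact (Matrix.isUnit_iff_isUnit_det _).mp hTi.isUnit
    rw [Matrix.det_mul] at h1
    exact isUnit_of_mul_isUnit_left h1
  have hRuu : IsUnit R := (Matrix.isUnit_iff_isUnit_det _).mpr hRu
  set N := R * A * R with hNdef
  have hNpsd : N.PosSemidef := by
    have := hA.mul_mul_conjTranspose_same R
    rwa [hRH] at this
  -- spectrum of N equals spectrum of A * T⁻¹
  have hNeq : (hRuu.unit : Matrix (Fin n) (Fin n) ℝ) * (A * T⁻¹)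
      * ((hRuu.unit⁻¹ : (Matrix (Fin n) (Fin n) ℝ)ˣ) : Matrix (Fin n) (Fin n) ℝ) = N := by
    rw [Matrix.coe_units_inv, IsUnit.unit_spec, ← hRR]
    simp only [← Matrix.mul_assoc]
    rw [Matrix.mul_assoc (R * A * R), Matrix.mul_nonsing_inv _ hRu, mul_one]
  have hspec_eq := spectrum.units_conjugate (R := ℝ) (u := hRuu.unit) (a := A * T⁻¹)
  rw [hNeq] at hspec_eq
  have hspecN : ∀ t ∈ spectrum ℝ N, t ≤ α := by
    intro t ht
    rw [hspec_eq] at ht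
    exact hspec t ht
  -- α • 1 - N is PSD
  have hMherm : ((α • (1 : Matrix (Fin n) (Fin n) ℝ)) - N).IsHermitian := by
    have h1 := hNpsd.1
    unfold Matrix.IsHermitian at h1 ⊢
    rw [Matrix.conjTranspose_sub, Matrix.conjTranspose_smul, Matrix.conjTranspose_one, h1]
    simp
  have hMpsd : ((α • (1 : Matrix (Fin n) (Fin n) ℝ)) - N).PosSemidef := by
    apply (Matrix.IsHermitian.posSemidef_iff_eigenvalues_nonneg hMherm).mpr
    intro i
    have hmem := hMherm.eigenvalues_mem_spectrum_real i
    have halg : α • (1 : Matrix (Fin n) (Fin n) ℝ) = algebraMap ℝ _ α := by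
      rw [Algebra.algebraMap_eq_smul_one]
    have hset : spectrum ℝ ((α • (1 : Matrix (Fin n) (Fin n) ℝ)) - N)
        = ({α} : Set ℝ) - spectrum ℝ N := by
      rw [halg]
      exact (spectrum.singleton_sub_eq N α).symm
    rw [hset] at hmem
    obtain ⟨a, ha, b, hb, hab⟩ := Set.mem_sub.mp hmem
    rw [Set.mem_singleton_iff] at ha
    rw [ha] at hab
    have hba := hspecN b hb
    have : hMherm.eigenvalues i = α - b := hab.symm
    show (0:ℝ) ≤ _
    linarith
  -- conjugate back
  have final := hMpsd.mul_mul_conjTranspose_same R⁻¹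
  have hRiH : (R⁻¹)ᴴ = R⁻¹ := by rw [Matrix.conjTranspose_nonsing_inv, hRH]
  rw [hRiH] at final
  have heq : R⁻¹ * ((α • (1 : Matrix (Fin n) (Fin n) ℝ)) - N) * R⁻¹ = α • T - A := by
    rw [Matrix.mul_sub, Matrix.sub_mul]
    congr 1
    · rw [Matrix.mul_smul, Matrix.smul_mul, mul_one]
      congr 1
      calc R⁻¹ * R⁻¹ = (R * R)⁻¹ := (Matrix.mul_inv_rev R R).symm
        _ = T := by rw [hRR, Matrix.nonsing_inv_nonsing_inv _ ((Matrix.isUnit_iff_isUnit_det _).mp hT.isUnit)]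
    · rw [hNdef]
      rw [show R⁻¹ * (R * A * R) * R⁻¹ = (R⁻¹ * R) * A * (R * R⁻¹) by
        simp only [Matrix.mul_assoc]]
      rw [Matrix.mul_nonsing_inv _ hRu, Matrix.nonsing_inv_mul _ hRu, one_mul, mul_one]
  rwa [heq] at final


/-- If the `Σ_{gh}` are PSD with `∑_h Σ_{gh}` positive definite, and every (real) eigenvalue of
`Σ_{gh} (∑_h Σ_{gh})⁻¹` is at most `1 - c` for some `c ∈ (0,1)`, then for any nonzero
`b₁, b₂`,
`∑_g ∑_{h₁} ∑_{h₂ ≠ h₁} (b₁ᵀ Σ_{gh₁} b₁)(b₂ᵀ Σ_{gh₂} b₂)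
  ≥ c ∑_g ∑_{h₁} ∑_{h₂} (b₁ᵀ Σ_{gh₁} b₁)(b₂ᵀ Σ_{gh₂} b₂)`. -/
theorem stmt_5 {k G : ℕ} (M : Fin G → ℕ)
    (S : (g : Fin G) → Fin (M g) → Matrix (Fin k) (Fin k) ℝ)
    (hpsd : ∀ g h, (S g h).PosSemidef)
    (hpd : ∀ g, (∑ h : Fin (M g), S g h).PosDef)
    (c : ℝ) (hc0 : 0 < c) (hc1 : c < 1)
    (heig : ∀ g h, ∀ t ∈ spectrum ℝ (S g h * (∑ h' : Fin (M g), S g h')⁻¹), t ≤ 1 - c)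
    (b₁ b₂ : Fin k → ℝ) (hb₁ : b₁ ≠ 0) (hb₂ : b₂ ≠ 0) :
    ∑ g : Fin G, ∑ h₁ : Fin (M g), ∑ h₂ ∈ univ.filter (· ≠ h₁),
        (b₁ ⬝ᵥ (S g h₁).mulVec b₁) * (b₂ ⬝ᵥ (S g h₂).mulVec b₂)
      ≥ c * ∑ g : Fin G, ∑ h₁ : Fin (M g), ∑ h₂ : Fin (M g),
          (b₁ ⬝ᵥ (S g h₁).mulVec b₁) * (b₂ ⬝ᵥ (S g h₂).mulVec b₂) := by
  rw [ge_iff_le, Finset.mul_sum]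
  apply Finset.sum_le_sum
  intro g _
  set a : Fin (M g) → ℝ := fun h => b₁ ⬝ᵥ (S g h).mulVec b₁ with ha
  set d : Fin (M g) → ℝ := fun h => b₂ ⬝ᵥ (S g h).mulVec b₂ with hd
  have hann : ∀ h, 0 ≤ a h := fun h => by
    have := (hpsd g h).dotProduct_mulVec_nonneg b₁; simpa using this
  have hdnn : ∀ h, 0 ≤ d h := fun h => by
    have := (hpsd g h).dotProduct_mulVec_nonneg b₂; simpa using this
  set D : ℝ := ∑ h, d h with hD
  set A : ℝ := ∑ h, a h with hA
  have hDval : b₂ ⬝ᵥ (∑ h : Fin (M g), S g h).mulVec b₂ = D := by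
    rw [hD, hd]
    have hmv : (∑ h : Fin (M g), S g h) *ᵥ b₂ = ∑ h : Fin (M g), (S g h) *ᵥ b₂ := by
      ext i
      simp only [Matrix.mulVec, dotProduct, Finset.sum_apply, Matrix.sum_apply,
        Finset.sum_mul]
      exact Finset.sum_comm
    rw [hmv]
    simp [dotProduct, Finset.sum_apply, Finset.mul_sum]
    exact Finset.sum_comm
  have hdle : ∀ h, d h ≤ (1 - c) * D := by
    intro h
    have hkey := key_psd (hpsd g h) (hpd g) (heig g h)
    have h0 := hkey.dotProduct_mulVec_nonneg b₂
    simp only [star_trivial, Matrix.sub_mulVec, Matrix.smul_mulVec,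
      dotProduct_sub, dotProduct_smul, smul_eq_mul] at h0
    rw [hDval] at h0
    have : (0:ℝ) ≤ (1 - c) * D - d h := by linarith [h0]
    linarith
  have hfilter : ∀ h₁ : Fin (M g), ∑ h₂ ∈ univ.filter (· ≠ h₁), d h₂ = D - d h₁ := by
    intro h₁
    rw [Finset.filter_ne', Finset.sum_erase_eq_sub (Finset.mem_univ _)]
  calc c * ∑ h₁ : Fin (M g), ∑ h₂ : Fin (M g), a h₁ * d h₂
      = ∑ h₁ : Fin (M g), a h₁ * (c * D) := by
        rw [Finset.mul_sum]
        refine Finset.sum_congr rfl fun h₁ _ => ?_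
        rw [← Finset.mul_sum, ← hD]; ring
    _ ≤ ∑ h₁ : Fin (M g), a h₁ * (D - d h₁) := by
        apply Finset.sum_le_sum
        intro h₁ _
        apply mul_le_mul_of_nonneg_left _ (hann h₁)
        have := hdle h₁
        linarith
    _ = ∑ h₁ : Fin (M g), ∑ h₂ ∈ univ.filter (· ≠ h₁), a h₁ * d h₂ := by
        refine Finset.sum_congr rfl fun h₁ _ => ?_
        rw [← Finset.mul_sum, hfilter h₁]
end

section
/- If for each clustering level $m \in \{0,\ldots,p-1\}$ the test of level $m$ against level $m+1$ rejects with probability tending to $\alpha$ when $m \ge m_0$ (true null) and with probability tending to 1 when $m < m_0$ (false null), and successive test outcomes at true nulls are such that the first test at $m_0$ is asymptotically exact, then the sequential estimator $\hat{m} = \min\{m : \text{test at } m \text{ does not reject}\}$ (with $\hat m = p$ if all reject) satisfies: $P(\hat{m} \le m_0 - 1) \to 0$; if $m_0 \le p-1$ then $P(\hat{m} = m_0) \to 1-\alpha$ and $P(\hat{m} \ge m_0+1) \to \alpha$; and if $m_0 = p$ then $P(\hat{m} = m_0) \to 1$. -/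
open Filter MeasureTheory

attribute [local instance] Classical.propDecidable

/-- Asymptotics of the sequential clustering-level testing procedure: if each test at a false
null `m < m₀` rejects with probability tending to 1 and each test at a true null
`m₀ ≤ m < p` rejects with probability tending to `α`, then the selected level
`m̂ = min {m : test at m does not reject}` (with `m̂ = p` if all reject) satisfies
`P(m̂ < m₀) → 0`; if `m₀ ≤ p - 1` then `P(m̂ = m₀) → 1 - α` and `P(m̂ ≥ m₀ + 1) → α`;
and if `m₀ = p` then `P(m̂ = m₀) → 1`. -/
theorem stmt_16 {Ω : Type*} [MeasurableSpace Ω]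
    (μ : ℕ → Measure Ω) (hprob : ∀ n, IsProbabilityMeasure (μ n))
    (p m₀ : ℕ) (hm₀p : m₀ ≤ p)
    (R : ℕ → ℕ → Set Ω) (hRmeas : ∀ n m, MeasurableSet (R n m))
    (α : ℝ) (hα0 : 0 < α) (hα1 : α < 1)
    (hfalse : ∀ m, m < m₀ → Tendsto (fun n => μ n (R n m)) atTop (nhds 1))
    (htrue : ∀ m, m₀ ≤ m → m < p →
      Tendsto (fun n => μ n (R n m)) atTop (nhds (ENNReal.ofReal α)))
    (mhat : ℕ → Ω → ℕ)
    (hmhat : ∀ n ω, mhat n ω =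
      if h : ∃ m, m < p ∧ ω ∉ R n m then Nat.find h else p) :
    Tendsto (fun n => μ n {ω | mhat n ω < m₀}) atTop (nhds 0) ∧
    (m₀ ≤ p - 1 ∧ 0 < p →
      Tendsto (fun n => μ n {ω | mhat n ω = m₀}) atTop (nhds (ENNReal.ofReal (1 - α))) ∧
      Tendsto (fun n => μ n {ω | m₀ + 1 ≤ mhat n ω}) atTop (nhds (ENNReal.ofReal α))) ∧
    (m₀ = p → Tendsto (fun n => μ n {ω | mhat n ω = m₀}) atTop (nhds 1)) := by
  have h1 : ∀ n, μ n Set.univ = 1 := fun n => (hprob n).measure_univ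
  set A : ℕ → Set Ω := fun n => ⋂ m ∈ Finset.range m₀, R n m with hA
  have hAmem : ∀ n ω, ω ∈ A n ↔ ∀ m < m₀, ω ∈ R n m := by
    intro n ω
    simp [hA]
  have hAmeas : ∀ n, MeasurableSet (A n) := fun n =>
    MeasurableSet.biInter ((Finset.range m₀) : Finset ℕ).countable_toSet
      (fun m _ => hRmeas n m)
  have hcompl0 : ∀ m, m < m₀ → Tendsto (fun n => μ n ((R n m)ᶜ)) atTop (nhds 0) := by
    intro m hm
    have heq : ∀ n, μ n ((R n m)ᶜ) = 1 - μ n (R n m) := fun n => by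
      rw [measure_compl (hRmeas n m) (measure_ne_top _ _), h1 n]
    simp_rw [heq]
    have := ENNReal.Tendsto.sub (tendsto_const_nhds (x := (1 : ENNReal)))
      (hfalse m hm) (Or.inl ENNReal.one_ne_top)
    simpa using this
  -- μ (A n)ᶜ → 0
  have hAc : Tendsto (fun n => μ n ((A n)ᶜ)) atTop (nhds 0) := by
    have hle : ∀ n, μ n ((A n)ᶜ) ≤ ∑ m ∈ Finset.range m₀, μ n ((R n m)ᶜ) := by
      intro n
      have hcompl : (A n)ᶜ = ⋃ m ∈ Finset.range m₀, (R n m)ᶜ := by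
        simp [hA, Set.compl_iInter]
      rw [hcompl]
      exact measure_biUnion_finset_le _ _
    have hsum : Tendsto (fun n => ∑ m ∈ Finset.range m₀, μ n ((R n m)ᶜ)) atTop (nhds 0) := by
      have := tendsto_finset_sum (Finset.range m₀)
        (fun m hm => hcompl0 m (Finset.mem_range.mp hm))
      simpa using this
    exact tendsto_of_tendsto_of_tendsto_of_le_of_le tendsto_const_nhds hsum
      (fun n => zero_le) hle
  refine ⟨?_, ?_, ?_⟩
  · -- P(m̂ < m₀) → 0
    have hsub : ∀ n, {ω | mhat n ω < m₀} ⊆ (A n)ᶜ := by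
      intro n ω hω
      simp only [Set.mem_setOf_eq] at hω
      rw [hmhat] at hω
      split_ifs at hω with h
      · intro hmem
        exact (Nat.find_spec h).2 ((hAmem n ω).mp hmem _ hω)
      · omega
    exact tendsto_of_tendsto_of_tendsto_of_le_of_le tendsto_const_nhds hAc
      (fun n => zero_le) (fun n => measure_mono (hsub n))
  · rintro ⟨hle, hp0⟩
    have hm₀lt : m₀ < p := by omega
    have hB : Tendsto (fun n => μ n (R n m₀)) atTop (nhds (ENNReal.ofReal α)) :=
      htrue m₀ le_rfl hm₀lt
    have heq2 : ∀ n, {ω | mhat n ω = m₀} = A n ∩ (R n m₀)ᶜ := by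
      intro n
      ext ω
      simp only [Set.mem_setOf_eq, Set.mem_inter_iff, Set.mem_compl_iff, hmhat]
      constructor
      · intro hω
        split_ifs at hω with h
        · have hspec := Nat.find_spec h
          rw [hω] at hspec
          refine ⟨(hAmem n ω).mpr fun m hm => ?_, hspec.2⟩
          by_contra hnot
          exact absurd ⟨lt_trans hm hm₀lt, hnot⟩ (Nat.find_min h (hω ▸ hm))
        · omega
      · rintro ⟨hAω, hnot⟩
        have h : ∃ m, m < p ∧ ω ∉ R n m := ⟨m₀, hm₀lt, hnot⟩
        rw [dif_pos h]
        rw [Nat.find_eq_iff]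
        exact ⟨⟨hm₀lt, hnot⟩, fun k hk => fun ⟨_, hk2⟩ => hk2 ((hAmem n ω).mp hAω k hk)⟩
    have heq3 : ∀ n, {ω | m₀ + 1 ≤ mhat n ω} = A n ∩ R n m₀ := by
      intro n
      ext ω
      simp only [Set.mem_setOf_eq, Set.mem_inter_iff, hmhat]
      constructor
      · intro hω
        split_ifs at hω with h
        · constructor
          · refine (hAmem n ω).mpr fun m hm => ?_
            by_contra hnot
            exact absurd ⟨lt_trans hm hm₀lt, hnot⟩ (Nat.find_min h (by omega))
          · by_contra hnot
            exact absurd ⟨hm₀lt, hnot⟩ (Nat.find_min h (by omega))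
        · push_neg at h
          constructor
          · exact (hAmem n ω).mpr fun m hm => h m (lt_trans hm hm₀lt)
          · exact h m₀ hm₀lt
      · rintro ⟨hAω, hmem⟩
        split_ifs with h
        · have : m₀ < Nat.find h := by
            rw [Nat.lt_find_iff]
            intro k hk
            rintro ⟨hkp, hknot⟩
            rcases Nat.lt_or_ge k m₀ with hk' | hk'
            · exact hknot ((hAmem n ω).mp hAω k hk')
            · exact hknot (by have : k = m₀ := le_antisymm hk hk'; rwa [this])
          omega
        · omega
    -- the two limits
    have hBc : Tendsto (fun n => μ n ((R n m₀)ᶜ)) atTop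
        (nhds (ENNReal.ofReal (1 - α))) := by
      have heq : ∀ n, μ n ((R n m₀)ᶜ) = 1 - μ n (R n m₀) := fun n => by
        rw [measure_compl (hRmeas n m₀) (measure_ne_top _ _), h1 n]
      simp_rw [heq]
      have h1α : ENNReal.ofReal (1 - α) = 1 - ENNReal.ofReal α := by
        rw [ENNReal.ofReal_sub _ hα0.le, ENNReal.ofReal_one]
      rw [h1α]
      exact ENNReal.Tendsto.sub tendsto_const_nhds hB (Or.inl ENNReal.one_ne_top)
    have key : ∀ (B : ℕ → Set Ω) (c : ENNReal),
        Tendsto (fun n => μ n (B n)) atTop (nhds c) →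
        Tendsto (fun n => μ n (A n ∩ B n)) atTop (nhds c) := by
      intro B c hBc'
      have hlow : ∀ n, μ n (B n) - μ n ((A n)ᶜ) ≤ μ n (A n ∩ B n) := by
        intro n
        rw [tsub_le_iff_right]
        calc μ n (B n) ≤ μ n ((A n ∩ B n) ∪ (A n)ᶜ) := by
              refine measure_mono fun ω hω => ?_
              by_cases hA' : ω ∈ A n
              · exact Or.inl ⟨hA', hω⟩
              · exact Or.inr hA'
          _ ≤ μ n (A n ∩ B n) + μ n ((A n)ᶜ) := measure_union_le _ _
      have hlowt : Tendsto (fun n => μ n (B n) - μ n ((A n)ᶜ)) atTop (nhds c) := by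
        have := ENNReal.Tendsto.sub hBc' hAc (Or.inr (by simp))
        simpa using this
      exact tendsto_of_tendsto_of_tendsto_of_le_of_le hlowt hBc' hlow
        (fun n => measure_mono Set.inter_subset_right)
    constructor
    · simp_rw [heq2]
      exact key _ _ hBc
    · simp_rw [heq3]
      exact key _ _ hB
  · intro hm₀eq
    have heq4 : ∀ n, {ω | mhat n ω = m₀} = A n := by
      intro n
      ext ω
      simp only [Set.mem_setOf_eq, hmhat]
      constructor
      · intro hω
        refine (hAmem n ω).mpr fun m hm => ?_
        split_ifs at hω with h
        · exact absurd hω (by have := Nat.find_spec h; omega)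
        · push_neg at h
          exact h m (by omega)
      · intro hAω
        rw [dif_neg]
        · omega
        · rintro ⟨m, hmp, hnot⟩
          exact hnot ((hAmem n ω).mp hAω m (by omega))
    simp_rw [heq4]
    have hlow : ∀ n, 1 - μ n ((A n)ᶜ) ≤ μ n (A n) := by
      intro n
      rw [tsub_le_iff_right]
      calc (1 : ENNReal) = μ n Set.univ := (h1 n).symm
        _ ≤ μ n (A n) + μ n ((A n)ᶜ) := by
            rw [← measure_union_add_inter₀ _ (hAmeas n).compl.nullMeasurableSet]
            simp
    have hlowt : Tendsto (fun n => 1 - μ n ((A n)ᶜ)) atTop (nhds 1) := by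
      have := ENNReal.Tendsto.sub (tendsto_const_nhds (x := (1 : ENNReal))) hAc
        (Or.inl ENNReal.one_ne_top)
      simpa using this
    have hup : ∀ n, μ n (A n) ≤ 1 := fun n => prob_le_one
    exact tendsto_of_tendsto_of_tendsto_of_le_of_le hlowt tendsto_const_nhds hlow hup
end
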